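/- If a tableau $T$ contains the staircase $R_{d+1} = \{(i,j) : i+j \le d+2\}$ and $|T| > (d+1)(d+2)/2$, then $T$ contains at least two distinct effective sets. -/

import Mathlib

/-- A subset `T` of the `n × m` grid `{1,…,n} × {1,…,m}` is a *tableau* if it is
downward-left closed. -/
def IsTableau (n m : ℕ) (T : Finset (ℕ × ℕ)) : Prop :=
  T ⊆ Finset.Icc 1 n ×ˢ Finset.Icc 1 m ∧
    ∀ p ∈ T, ∀ k l : ℕ, 1 ≤ k → k ≤ p.1 → 1 ≤ l → l ≤ p.2 → (k, l) ∈ T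

/-- A subset `Q` of the grid (rows indexed by `ℕ`) is *effective* if there are `d+1`
distinct rows `q 0, …, q d` such that `Q` meets row `q ν` in exactly `ν+1` points
and meets no other row. -/
def IsEffectiveN (d : ℕ) (Q : Finset (ℕ × ℕ)) : Prop :=
  ∃ q : Fin (d + 1) → ℕ, Function.Injective q ∧
    (∀ ν : Fin (d + 1), (Q.filter (fun p => p.1 = q ν)).card = ν.1 + 1) ∧
    (∀ p ∈ Q, ∃ ν, p.1 = q ν)

open Finset

/-- The staircase `R_{d+1}`. -/
def stair (d : ℕ) : Finset (ℕ × ℕ) :=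
  (Finset.Icc 1 (d+1)).biUnion (fun i => {i} ×ˢ Finset.Icc 1 (d+2-i))

lemma mem_stair {d : ℕ} {p : ℕ × ℕ} :
    p ∈ stair d ↔ 1 ≤ p.1 ∧ p.1 ≤ d+1 ∧ 1 ≤ p.2 ∧ p.1 + p.2 ≤ d+2 := by
  simp only [stair, mem_biUnion, mem_Icc, mem_product, mem_singleton]
  constructor
  · rintro ⟨i, ⟨h1, h2⟩, rfl, h3, h4⟩
    omega
  · rintro ⟨h1, h2, h3, h4⟩
    exact ⟨p.1, ⟨h1, h2⟩, rfl, h3, by omega⟩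

lemma card_stair (d : ℕ) : (stair d).card = (d+1)*(d+2)/2 := by
  rw [stair, card_biUnion]
  · have h1 : ∀ i ∈ Finset.Icc 1 (d+1), ({i} ×ˢ Finset.Icc 1 (d+2-i)).card = d+2-i := by
      intro i hi
      rw [card_product, card_singleton, one_mul, Nat.card_Icc]
      simp only [mem_Icc] at hi
      omega
    rw [Finset.sum_congr rfl h1]
    have h2 : ∑ i ∈ Finset.Icc 1 (d+1), (d+2-i) = ∑ j ∈ Finset.range (d+1), (j+1) := by
      refine Finset.sum_nbij' (fun i => d+1-i) (fun j => d+1-j) ?_ ?_ ?_ ?_ ?_ <;>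
        · intro i hi
          simp only [mem_Icc, mem_range] at hi ⊢
          omega
    have h3 : ∑ j ∈ Finset.range (d+1), (j+1) = ∑ j ∈ Finset.range (d+2), j := by
      rw [Finset.sum_range_succ' (fun j => j)]
      simp
    have h4 := Finset.sum_range_id_mul_two (d+2)
    have h5 : (d+2) * (d+2-1) = (d+1) * (d+2) := by
      rw [show d+2-1 = d+1 from rfl, Nat.mul_comm]
    rw [h2, h3]
    omega
  · intro x hx y hy hxy
    rw [Function.onFun, Finset.disjoint_left]
    intro z hz1 hz2
    simp only [mem_product, mem_singleton] at hz1 hz2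
    exact hxy (hz1.1.symm.trans hz2.1)

lemma row_stair {d r : ℕ} (h1 : 1 ≤ r) (h2 : r ≤ d+1) :
    (stair d).filter (fun p => p.1 = r) = {r} ×ˢ Finset.Icc 1 (d+2-r) := by
  ext ⟨i, j⟩
  simp only [mem_filter, mem_stair, mem_product, mem_singleton, mem_Icc]
  omega

lemma card_row_stair {d r : ℕ} (h1 : 1 ≤ r) (h2 : r ≤ d+1) :
    ((stair d).filter (fun p => p.1 = r)).card = d+2-r := by
  rw [row_stair h1 h2, card_product, card_singleton, one_mul, Nat.card_Icc]
  omega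

lemma effective_stair (d : ℕ) : IsEffectiveN d (stair d) := by
  refine ⟨fun ν => d+1-ν.1, ?_, ?_, ?_⟩
  · intro ν μ h
    have hν := ν.2
    have hμ := μ.2
    have h' : d+1-ν.1 = d+1-μ.1 := h
    exact Fin.ext (by omega)
  · intro ν
    have hν := ν.2
    show ((stair d).filter (fun p => p.1 = d+1-ν.1)).card = ν.1 + 1
    rw [card_row_stair (by omega) (by omega)]
    omega
  · intro p hp
    rw [mem_stair] at hp
    exact ⟨⟨d+1-p.1, by omega⟩, by simp; omega⟩

theorem stmt_16 (n m d : ℕ) (hn : d + 1 ≤ n) (hm : d + 1 ≤ m)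
    (T : Finset (ℕ × ℕ)) (hT : IsTableau n m T)
    (hR : (Finset.Icc 1 n ×ˢ Finset.Icc 1 m).filter
      (fun p => p.1 + p.2 ≤ d + 2) ⊆ T)
    (hcard : (d + 1) * (d + 2) / 2 < T.card) :
    ∃ Q₁ Q₂ : Finset (ℕ × ℕ), Q₁ ⊆ T ∧ Q₂ ⊆ T ∧ Q₁ ≠ Q₂ ∧
      IsEffectiveN d Q₁ ∧ IsEffectiveN d Q₂ := by
  obtain ⟨hgrid, hclosed⟩ := hT
  -- the staircase is contained in T
  have hSsub : stair d ⊆ T := by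
    intro p hp
    rw [mem_stair] at hp
    apply hR
    simp only [mem_filter, mem_product, mem_Icc]
    omega
  -- there is a point of T outside the staircase
  obtain ⟨p, hpT, hpS⟩ : ∃ p ∈ T, p ∉ stair d := by
    by_contra h
    push_neg at h
    have hTS : T ⊆ stair d := fun x hx => h x hx
    have := Finset.card_le_card hTS
    rw [card_stair] at this
    omega
  obtain ⟨a, b⟩ := p
  have hab : 1 ≤ a ∧ a ≤ n ∧ 1 ≤ b ∧ b ≤ m := by
    have := hgrid hpT
    simp only [mem_product, mem_Icc] at this
    exact ⟨this.1.1, this.1.2, this.2.1, this.2.2⟩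
  rw [mem_stair] at hpS
  simp only [not_and] at hpS
  by_cases hcase : a ≤ d + 1
  · -- Case 1: a ≤ d+1, hence a+b ≥ d+3
    have hb : d + 3 ≤ a + b := by omega
    set x : ℕ × ℕ := (a, d+3-a) with hx
    set y : ℕ × ℕ := (a, d+2-a) with hy
    have hxT : x ∈ T := hclosed (a, b) hpT a (d+3-a) (by omega) (le_refl a) (by omega) (by omega)
    have hxS : x ∉ stair d := by rw [mem_stair]; simp only [hx]; omega
    have hyS : y ∈ stair d := by rw [mem_stair]; simp only [hy]; omega
    refine ⟨stair d, insert x ((stair d).erase y), hSsub, ?_, ?_, effective_stair d, ?_⟩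
    · exact insert_subset hxT ((erase_subset _ _).trans hSsub)
    · intro h
      exact hxS (h ▸ mem_insert_self x _)
    · refine ⟨fun ν => d+1-ν.1, ?_, ?_, ?_⟩
      · intro ν μ h
        have hν := ν.2
        have hμ := μ.2
        have h' : d+1-ν.1 = d+1-μ.1 := h
        exact Fin.ext (by omega)
      · intro ν
        have hν := ν.2
        show ((insert x ((stair d).erase y)).filter
          (fun p => p.1 = d + 1 - ν.1)).card = ν.1 + 1
        have hr1 : 1 ≤ d + 1 - ν.1 := by omega
        have hr2 : d + 1 - ν.1 ≤ d + 1 := by omega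
        rw [Finset.filter_insert, Finset.filter_erase]
        by_cases hra : d + 1 - ν.1 = a
        · rw [if_pos (by simp [hx]; omega)]
          rw [card_insert_of_notMem (by
            intro hmem
            exact hxS (mem_filter.mp (mem_of_mem_erase hmem)).1)]
          rw [card_erase_of_mem (by
            rw [mem_filter]
            exact ⟨hyS, by simp [hy]; omega⟩)]
          rw [card_row_stair hr1 hr2]
          omega
        · rw [if_neg (by simp [hx]; omega)]
          rw [Finset.erase_eq_of_notMem (by
            rw [mem_filter]
            rintro ⟨-, h⟩
            simp [hy] at h
            omega)]
          rw [card_row_stair hr1 hr2]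
          omega
      · intro p hp
        rcases mem_insert.mp hp with rfl | hp'
        · exact ⟨⟨d+1-a, by omega⟩, by simp [hx]; omega⟩
        · have := mem_stair.mp (mem_of_mem_erase hp')
          exact ⟨⟨d+1-p.1, by omega⟩, by simp; omega⟩
  · -- Case 2: a ≥ d+2
    set x : ℕ × ℕ := (a, 1) with hx
    set y : ℕ × ℕ := (d+1, 1) with hy
    have hxT : x ∈ T := hclosed (a, b) hpT a 1 (by omega) (le_refl a) (by omega) (by omega)
    have hxS : x ∉ stair d := by rw [mem_stair]; simp only [hx]; omega
    have hyS : y ∈ stair d := by rw [mem_stair]; simp only [hy]; omega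
    refine ⟨stair d, insert x ((stair d).erase y), hSsub, ?_, ?_, effective_stair d, ?_⟩
    · exact insert_subset hxT ((erase_subset _ _).trans hSsub)
    · intro h
      exact hxS (h ▸ mem_insert_self x _)
    · refine ⟨fun ν => if ν.1 = 0 then a else d+1-ν.1, ?_, ?_, ?_⟩
      · intro ν μ h
        have hν := ν.2
        have hμ := μ.2
        have h' : (if ν.1 = 0 then a else d+1-ν.1) = (if μ.1 = 0 then a else d+1-μ.1) := h
        apply Fin.ext
        split_ifs at h' <;> omega
      · intro ν
        have hν := ν.2
        show ((insert x ((stair d).erase y)).filter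
          (fun p => p.1 = if ν.1 = 0 then a else d + 1 - ν.1)).card = ν.1 + 1
        by_cases hν0 : ν.1 = 0
        · simp only [hν0, eq_self_iff_true, ite_true]
          rw [Finset.filter_insert, Finset.filter_erase]
          rw [if_pos (by simp [hx])]
          have hrow : (stair d).filter (fun p => p.1 = a) = ∅ := by
            apply Finset.filter_false_of_mem
            intro p hp
            have := mem_stair.mp hp
            omega
          rw [hrow]
          simp
        · simp only [if_neg hν0]
          have hr1 : 1 ≤ d + 1 - ν.1 := by omega
          have hr2 : d + 1 - ν.1 ≤ d := by omega
          rw [Finset.filter_insert, Finset.filter_erase]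
          rw [if_neg (by simp [hx]; omega)]
          rw [Finset.erase_eq_of_notMem (by
            rw [mem_filter]
            rintro ⟨-, h⟩
            simp [hy] at h
            omega)]
          rw [card_row_stair hr1 (by omega)]
          omega
      · intro p hp
        rcases mem_insert.mp hp with rfl | hp'
        · exact ⟨⟨0, by omega⟩, by simp [hx]⟩
        · have hps := mem_stair.mp (mem_of_mem_erase hp')
          have hpy : p ≠ y := ne_of_mem_erase hp'
          have hlt : p.1 ≤ d := by
            by_contra h
            push_neg at h
            have h1 : p.1 = d + 1 := by omega
            have h2 : p.2 = 1 := by omega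
            exact hpy (by rw [hy, ← h1, ← h2])
          refine ⟨⟨d+1-p.1, by omega⟩, ?_⟩
          show p.1 = if d+1-p.1 = 0 then a else d+1-(d+1-p.1)
          rw [if_neg (by omega)]
          omega
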